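/- For any fixed square spectral factor W̄_Ψ of Ψ, the Hellinger distance satisfies d_H(Φ, Ψ) = inf{ ‖W̄_Ψ − W_Φ‖₂ : W_Φ ∈ L₂^{m×m}(𝕋), W_Φ W_Φ* = Φ }; i.e., fixing one factor and minimizing only over factors of Φ gives the same value as minimizing over both factors. -/

import Mathlib

open Matrix MeasureTheory
open scoped ComplexOrder

/-- Normalized Lebesgue measure dθ/2π on one period, modeling the unit circle. -/
noncomputable def muT : Measure ℝ :=
  (ENNReal.ofReal (2 * Real.pi)⁻¹) • (volume.restrict (Set.Ioc 0 (2 * Real.pi)))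

/-- Bounded coercive Hermitian-valued spectral density on the circle. -/
def IsSpecDens {m : ℕ} (Φ : ℝ → Matrix (Fin m) (Fin m) ℂ) : Prop :=
  (∀ i j, Measurable fun θ => Φ θ i j) ∧ Function.Periodic Φ (2 * Real.pi) ∧
  (∀ θ, (Φ θ).IsHermitian) ∧ (∃ C : ℝ, ∀ θ i j, ‖Φ θ i j‖ ≤ C) ∧
  (∃ c : ℝ, 0 < c ∧ ∀ θ, ((Φ θ) - c • (1 : Matrix (Fin m) (Fin m) ℂ)).PosSemidef)

/-- W is a square spectral factor of Φ lying in L₂^{m×m}(𝕋). -/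
def IsFactor {m : ℕ} (W Φ : ℝ → Matrix (Fin m) (Fin m) ℂ) : Prop :=
  (∀ i j, Measurable fun θ => W θ i j) ∧
  Integrable (fun θ => ((W θ) * (W θ)ᴴ).trace.re) muT ∧
  (∀ᵐ θ ∂muT, (W θ) * (W θ)ᴴ = Φ θ)

/-- The L₂ norm of a matrix-valued function: ‖W‖₂ = (tr ∫ W W*)^{1/2}. -/
noncomputable def normL2 {m : ℕ} (W : ℝ → Matrix (Fin m) (Fin m) ℂ) : ℝ :=
  Real.sqrt (∫ θ, ((W θ) * (W θ)ᴴ).trace.re ∂muT)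

/-- The multivariable Hellinger distance. -/
noncomputable def dH {m : ℕ} (Φ Ψ : ℝ → Matrix (Fin m) (Fin m) ℂ) : ℝ :=
  sInf {r : ℝ | ∃ WΦ WΨ, IsFactor WΦ Φ ∧ IsFactor WΨ Ψ ∧
    r = normL2 (fun θ => WΦ θ - WΨ θ)}

section Aux

variable {m : ℕ}

lemma meas_det {A : ℝ → Matrix (Fin m) (Fin m) ℂ}
    (h : ∀ i j, Measurable fun θ => A θ i j) : Measurable fun θ => (A θ).det := by
  simp_rw [Matrix.det_apply']
  exact Finset.measurable_sum _ fun σ _ =>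
    ((Finset.measurable_prod _ fun i _ => h _ _).const_mul _)

lemma meas_entry_mul {A B : ℝ → Matrix (Fin m) (Fin m) ℂ}
    (hA : ∀ i j, Measurable fun θ => A θ i j) (hB : ∀ i j, Measurable fun θ => B θ i j) :
    ∀ i j, Measurable fun θ => (A θ * B θ) i j := by
  intro i j
  simp_rw [Matrix.mul_apply]
  exact Finset.measurable_sum _ fun k _ => (hA i k).mul (hB k j)

lemma meas_entry_ct {A : ℝ → Matrix (Fin m) (Fin m) ℂ}
    (hA : ∀ i j, Measurable fun θ => A θ i j) :
    ∀ i j, Measurable fun θ => (A θ)ᴴ i j := by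
  intro i j
  simp_rw [Matrix.conjTranspose_apply]
  exact continuous_star.measurable.comp (hA j i)

lemma meas_entry_inv {A : ℝ → Matrix (Fin m) (Fin m) ℂ}
    (hA : ∀ i j, Measurable fun θ => A θ i j) :
    ∀ i j, Measurable fun θ => (A θ)⁻¹ i j := by
  intro i j
  simp_rw [Matrix.inv_def, Matrix.smul_apply, smul_eq_mul, Ring.inverse_eq_inv,
    Matrix.adjugate_apply]
  refine ((meas_det hA).inv).mul (meas_det ?_)
  intro a b
  by_cases hab : a = j
  · simp [Matrix.updateRow_apply, hab]
  · simpa [Matrix.updateRow_apply, hab] using hA a b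

lemma negsub (A B : Matrix (Fin m) (Fin m) ℂ) :
    (A - B) * (A - B)ᴴ = (B - A) * (B - A)ᴴ := by
  rw [← neg_sub B A, Matrix.conjTranspose_neg, neg_mul_neg]

lemma unitary_rot (A U : Matrix (Fin m) (Fin m) ℂ) (hU : Uᴴ * U = 1) :
    (A * Uᴴ) * (A * Uᴴ)ᴴ = A * Aᴴ := by
  rw [Matrix.conjTranspose_mul, Matrix.conjTranspose_conjTranspose, Matrix.mul_assoc,
    ← Matrix.mul_assoc Uᴴ, hU, Matrix.one_mul]

lemma rotate {S B W : Matrix (Fin m) (Fin m) ℂ} (hB : B * Bᴴ = S) (hW : W * Wᴴ = S)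
    (hS : IsUnit S.det) :
    (B⁻¹ * W)ᴴ * (B⁻¹ * W) = 1 ∧ W * (B⁻¹ * W)ᴴ = B := by
  have hdB : IsUnit B.det := by
    have h : B.det * Bᴴ.det = S.det := by rw [← Matrix.det_mul, hB]
    exact isUnit_of_mul_isUnit_left (h ▸ hS)
  have hdBH : IsUnit Bᴴ.det := by
    rw [Matrix.det_conjTranspose]; exact hdB.star
  have hct : B⁻¹ᴴ = Bᴴ⁻¹ := Matrix.conjTranspose_nonsing_inv B
  have key : W * (B⁻¹ * W)ᴴ = B := by
    rw [Matrix.conjTranspose_mul, hct, ← Matrix.mul_assoc, hW, ← hB, Matrix.mul_assoc,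
      Matrix.mul_nonsing_inv _ hdBH, Matrix.mul_one]
  refine ⟨mul_eq_one_comm.mp ?_, key⟩
  calc (B⁻¹ * W) * (B⁻¹ * W)ᴴ = B⁻¹ * (W * (B⁻¹ * W)ᴴ) := by rw [Matrix.mul_assoc]
    _ = 1 := by rw [key, Matrix.nonsing_inv_mul _ hdB]

lemma specDens_isUnit_det {Ψ : ℝ → Matrix (Fin m) (Fin m) ℂ} (hΨ : IsSpecDens Ψ) (θ : ℝ) :
    IsUnit (Ψ θ).det := by
  obtain ⟨c, hc, h⟩ := hΨ.2.2.2.2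
  have h1 : (c • (1 : Matrix (Fin m) (Fin m) ℂ)).PosDef := by
    have he : c • (1 : Matrix (Fin m) (Fin m) ℂ) = Matrix.diagonal (fun _ => (c : ℂ)) := by
      ext i j
      by_cases hij : i = j <;>
        simp [Matrix.one_apply, Matrix.diagonal_apply, hij, Complex.real_smul]
    rw [he]
    exact Matrix.posDef_diagonal_iff.mpr fun i => by positivity
  have h2 : (Ψ θ).PosDef := by
    have := Matrix.PosDef.posSemidef_add (h θ) h1
    rwa [sub_add_cancel] at this
  exact h2.det_pos.ne'.isUnit

end Aux

theorem stmt_13 {m : ℕ} (Φ Ψ : ℝ → Matrix (Fin m) (Fin m) ℂ)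
    (hΦ : IsSpecDens Φ) (hΨ : IsSpecDens Ψ)
    (WΨbar : ℝ → Matrix (Fin m) (Fin m) ℂ) (hWΨbar : IsFactor WΨbar Ψ) :
    dH Φ Ψ = sInf {r : ℝ | ∃ WΦ, IsFactor WΦ Φ ∧
      r = normL2 (fun θ => WΨbar θ - WΦ θ)} := by
  have key : {r : ℝ | ∃ WΦ WΨ, IsFactor WΦ Φ ∧ IsFactor WΨ Ψ ∧
      r = normL2 (fun θ => WΦ θ - WΨ θ)} =
      {r : ℝ | ∃ WΦ, IsFactor WΦ Φ ∧ r = normL2 (fun θ => WΨbar θ - WΦ θ)} := by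
    ext r
    simp only [Set.mem_setOf_eq]
    constructor
    · rintro ⟨WΦ, WΨ, hWΦ, hWΨ, rfl⟩
      set U : ℝ → Matrix (Fin m) (Fin m) ℂ := fun θ => (WΨbar θ)⁻¹ * WΨ θ with hUdef
      -- a.e. facts
      have hgood : ∀ᵐ θ ∂muT, (U θ)ᴴ * U θ = 1 ∧ WΨ θ * (U θ)ᴴ = WΨbar θ := by
        filter_upwards [hWΨ.2.2, hWΨbar.2.2] with θ h1 h2
        exact rotate h2 h1 (specDens_isUnit_det hΨ θ)
      refine ⟨fun θ => WΦ θ * (U θ)ᴴ, ⟨?_, ?_, ?_⟩, ?_⟩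
      · exact meas_entry_mul hWΦ.1
          (meas_entry_ct (meas_entry_mul (meas_entry_inv hWΨbar.1) hWΨ.1))
      · refine hWΦ.2.1.congr ?_
        filter_upwards [hgood] with θ ⟨h1, _⟩
        rw [unitary_rot _ _ h1]
      · filter_upwards [hgood, hWΦ.2.2] with θ ⟨h1, _⟩ h3
        rw [unitary_rot _ _ h1, h3]
      · unfold normL2
        congr 1
        refine integral_congr_ae ?_
        filter_upwards [hgood] with θ ⟨h1, h2⟩
        have he : WΨbar θ - WΦ θ * (U θ)ᴴ = (WΨ θ - WΦ θ) * (U θ)ᴴ := by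
          rw [Matrix.sub_mul, h2]
        rw [he, unitary_rot _ _ h1, negsub]
    · rintro ⟨WΦ, hWΦ, rfl⟩
      refine ⟨WΦ, WΨbar, hWΦ, hWΨbar, ?_⟩
      unfold normL2
      congr 1
      refine integral_congr_ae (Filter.Eventually.of_forall fun θ => ?_)
      dsimp only
      rw [negsub]
  rw [dH, key]
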